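/- With the setting of the penalised equation: if 0 < ρ ≤ κ, f ∈ V*, φ ∈ H, and u_ρ, u_κ solve Au_ρ + (1/ρ)σ_ρ(u_ρ − Φ(φ)) = f and Au_κ + (1/κ)σ_κ(u_κ − Φ(φ)) = f respectively, then u_ρ ≤ u_κ a.e. -/

import Mathlib

open MeasureTheory

noncomputable def sig (ρ r : ℝ) : ℝ :=
  if r ≤ 0 then 0 else if r < ρ then r ^ 2 / (2 * ρ) else r - ρ / 2

lemma sig_nonneg {ρ : ℝ} (hρ : 0 < ρ) (r : ℝ) : 0 ≤ sig ρ r := by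
  unfold sig
  split_ifs with h1 h2
  · exact le_refl 0
  · positivity
  · push_neg at h2; linarith

lemma sig_mono {ρ : ℝ} (hρ : 0 < ρ) : Monotone (sig ρ) := by
  intro a b hab
  unfold sig
  split_ifs <;> (try simp only [not_le, not_lt] at *) <;>
    first
      | rfl
      | positivity
      | linarith
      | (rw [div_le_div_iff₀ (by positivity) (by positivity)];
         nlinarith [mul_nonneg (sub_nonneg.mpr hab) (show (0:ℝ) ≤ a + b by linarith)])
      | (rw [div_le_iff₀ (by positivity)]; nlinarith)

lemma sig_abs_le {ρ : ℝ} (hρ : 0 < ρ) (r : ℝ) : |sig ρ r| ≤ |r| := by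
  rw [abs_of_nonneg (sig_nonneg hρ r)]
  unfold sig
  split_ifs with h1 h2
  · positivity
  · push_neg at h1
    rw [abs_of_pos h1, div_le_iff₀ (by positivity)]
    nlinarith
  · push_neg at h1 h2
    rw [abs_of_pos h1]
    linarith

lemma sig_scale {ρ κ r : ℝ} (hρ : 0 < ρ) (hρκ : ρ ≤ κ) :
    (1 / κ) * sig κ r ≤ (1 / ρ) * sig ρ r := by
  have hκ : 0 < κ := lt_of_lt_of_le hρ hρκ
  unfold sig
  split_ifs with h1 h2 h3 h4
  · simp
  · -- 0 < r < ρ ≤ κ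
    push_neg at h1
    rw [show (1/κ) * (r^2/(2*κ)) = r^2/(2*(κ*κ)) by ring,
        show (1/ρ) * (r^2/(2*ρ)) = r^2/(2*(ρ*ρ)) by ring,
        div_le_div_iff₀ (by positivity) (by positivity)]
    nlinarith [sq_nonneg r, mul_le_mul hρκ hρκ hρ.le hκ.le]
  · -- ρ ≤ r < κ
    push_neg at h1 h3
    rw [show (1/κ) * (r^2/(2*κ)) = r^2/(2*(κ*κ)) by ring,
        show (1/ρ) * (r - ρ/2) = (r - ρ/2)/ρ by ring,
        div_le_div_iff₀ (by positivity) (by positivity)]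
    nlinarith [mul_le_mul h2.le h2.le h1.le hκ.le, mul_nonneg (sub_nonneg.mpr h3) hκ.le]
  · -- impossible: κ ≤ r < ρ
    push_neg at h2
    linarith
  · -- κ ≤ r
    push_neg at h1 h2 h4
    rw [show (1/κ) * (r - κ/2) = (r - κ/2)/κ by ring,
        show (1/ρ) * (r - ρ/2) = (r - ρ/2)/ρ by ring,
        div_le_div_iff₀ (by positivity) (by positivity)]
    nlinarith

lemma integrable_mul_L2 {Ω : Type*} [MeasureSpace Ω] {F : Ω → ℝ}
    (hF : MemLp F 2 (volume : Measure Ω)) (w : Lp ℝ 2 (volume : Measure Ω)) :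
    Integrable (fun x => F x * w x) volume := by
  have h := L2.integrable_inner (𝕜 := ℝ) (hF.toLp F) w
  simp only [RCLike.inner_apply, conj_trivial] at h
  exact h.congr ((hF.coeFn_toLp).mono fun x hx => by dsimp only; rw [hx, mul_comm])

theorem stmt_10
    {Ω : Type*} [MeasureSpace Ω]
    {V : Type*} [NormedAddCommGroup V] [InnerProductSpace ℝ V]
    (ι : V →L[ℝ] Lp ℝ 2 (volume : Measure Ω))
    (pos : V → V) (hpos : ∀ u : V, ι (pos u) = (ι u) ⊔ 0)
    (A : V →L[ℝ] V →L[ℝ] ℝ)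
    (Ca : ℝ) (hCa : 0 < Ca)
    (hcoer : ∀ u : V, Ca * ‖u‖ ^ 2 ≤ A u u)
    (hTmono : ∀ u : V, A (pos u) (pos u - u) ≤ 0)
    (ρ κ : ℝ) (hρ : 0 < ρ) (hρκ : ρ ≤ κ)
    (Φ : Lp ℝ 2 (volume : Measure Ω) → V)
    (f : V →L[ℝ] ℝ)
    (φ : Lp ℝ 2 (volume : Measure Ω))
    (uρ uκ : V)
    (huρ : ∀ w : V, A uρ w + (1 / ρ) * ∫ x, sig ρ ((ι uρ - ι (Φ φ)) x) * (ι w) x = f w)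
    (huκ : ∀ w : V, A uκ w + (1 / κ) * ∫ x, sig κ ((ι uκ - ι (Φ φ)) x) * (ι w) x = f w) :
    ι uρ ≤ ι uκ := by
  have hκ : 0 < κ := lt_of_lt_of_le hρ hρκ
  set z : V := pos (uκ - uρ) with hz
  set w0 : V := (uρ - uκ) + z with hw0
  -- membership in L² of the penalty terms
  have hFmem : MemLp (fun x => sig ρ ((ι uρ - ι (Φ φ)) x)) 2 (volume : Measure Ω) := by
    refine MemLp.of_le (Lp.memLp (ι uρ - ι (Φ φ))) ?_ ?_
    · exact ((sig_mono hρ).measurable.comp_aemeasurable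
        (Lp.aestronglyMeasurable _).aemeasurable).aestronglyMeasurable
    · exact Filter.Eventually.of_forall fun x => by
        simpa [Real.norm_eq_abs] using sig_abs_le hρ ((ι uρ - ι (Φ φ)) x)
  have hGmem : MemLp (fun x => sig κ ((ι uκ - ι (Φ φ)) x)) 2 (volume : Measure Ω) := by
    refine MemLp.of_le (Lp.memLp (ι uκ - ι (Φ φ))) ?_ ?_
    · exact ((sig_mono hκ).measurable.comp_aemeasurable
        (Lp.aestronglyMeasurable _).aemeasurable).aestronglyMeasurable
    · exact Filter.Eventually.of_forall fun x => by
        simpa [Real.norm_eq_abs] using sig_abs_le hκ ((ι uκ - ι (Φ φ)) x)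
  have hIρ := integrable_mul_L2 hFmem (ι w0)
  have hIκ := integrable_mul_L2 hGmem (ι w0)
  -- identification of ι w0
  have hw0e : ι w0 = (ι uρ - ι uκ) + ((ι uκ - ι uρ) ⊔ 0) := by
    rw [hw0, map_add, map_sub, hz, hpos, map_sub]
  have e1 : ∀ᵐ x ∂(volume : Measure Ω),
      (ι w0) x = ((ι uρ) x - (ι uκ) x) + max ((ι uκ) x - (ι uρ) x) 0 := by
    rw [hw0e]
    filter_upwards [Lp.coeFn_add (ι uρ - ι uκ) ((ι uκ - ι uρ) ⊔ 0),
      Lp.coeFn_sub (ι uρ) (ι uκ), Lp.coeFn_sup (ι uκ - ι uρ) 0,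
      Lp.coeFn_sub (ι uκ) (ι uρ), Lp.coeFn_zero ℝ 2 (volume : Measure Ω)] with x h1 h2 h3 h4 h5
    simp only [Pi.add_apply, Pi.sub_apply, Pi.sup_apply, Pi.zero_apply] at h1 h2 h3 h4 h5
    rw [h1, h2, h3, h4, h5]
  have e2 : ∀ᵐ x ∂(volume : Measure Ω),
      (ι uρ - ι (Φ φ)) x = (ι uρ) x - (ι (Φ φ)) x :=
    (Lp.coeFn_sub (ι uρ) (ι (Φ φ))).mono fun x hx => by simpa using hx
  have e3 : ∀ᵐ x ∂(volume : Measure Ω),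
      (ι uκ - ι (Φ φ)) x = (ι uκ) x - (ι (Φ φ)) x :=
    (Lp.coeFn_sub (ι uκ) (ι (Φ φ))).mono fun x hx => by simpa using hx
  -- the sign of the integrand
  have hsign : ∀ᵐ x ∂(volume : Measure Ω),
      ((1/κ) * sig κ ((ι uκ - ι (Φ φ)) x) - (1/ρ) * sig ρ ((ι uρ - ι (Φ φ)) x))
        * (ι w0) x ≤ 0 := by
    filter_upwards [e1, e2, e3] with x h1 h2 h3
    rw [h1, h2, h3]
    set a := (ι uρ) x
    set b := (ι uκ) x
    set c := (ι (Φ φ)) x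
    rcases le_total a b with hab | hba
    · rw [max_eq_left (by linarith : b - a ≥ 0)]
      ring_nf
      nlinarith [sig_nonneg hρ (a - c)]
    · have h4 : (a - b) + max (b - a) 0 = a - b := by
        rw [max_eq_right (by linarith)]; ring
      rw [h4]
      have f1 : (1/κ) * sig κ (b - c) ≤ (1/ρ) * sig ρ (b - c) := sig_scale hρ hρκ
      have f2 : (1/ρ) * sig ρ (b - c) ≤ (1/ρ) * sig ρ (a - c) :=
        mul_le_mul_of_nonneg_left (sig_mono hρ (by linarith)) (by positivity)
      have hX : (1/κ) * sig κ (b - c) - (1/ρ) * sig ρ (a - c) ≤ 0 := by linarith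
      calc ((1/κ) * sig κ (b - c) - (1/ρ) * sig ρ (a - c)) * (a - b)
          ≤ 0 * (a - b) := mul_le_mul_of_nonneg_right hX (by linarith)
        _ = 0 := zero_mul _
  -- the key inequality from the two equations
  have hA1 : A uρ w0 - A uκ w0 ≤ 0 := by
    have key : A uρ w0 - A uκ w0 =
        (1/κ) * (∫ x, sig κ ((ι uκ - ι (Φ φ)) x) * (ι w0) x)
          - (1/ρ) * (∫ x, sig ρ ((ι uρ - ι (Φ φ)) x) * (ι w0) x) := by
      linarith [huρ w0, huκ w0]
    have heq : ∫ x, ((1/κ) * sig κ ((ι uκ - ι (Φ φ)) x)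
          - (1/ρ) * sig ρ ((ι uρ - ι (Φ φ)) x)) * (ι w0) x =
        (1/κ) * (∫ x, sig κ ((ι uκ - ι (Φ φ)) x) * (ι w0) x)
          - (1/ρ) * (∫ x, sig ρ ((ι uρ - ι (Φ φ)) x) * (ι w0) x) := by
      simp_rw [sub_mul, mul_assoc]
      rw [integral_sub (hIκ.const_mul _) (hIρ.const_mul _),
        integral_const_mul, integral_const_mul]
    rw [key, ← heq]
    exact integral_nonpos_of_ae hsign
  -- T-monotonicity
  have hA2 : A z w0 ≤ 0 := by
    have h := hTmono (uκ - uρ)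
    have he : pos (uκ - uρ) - (uκ - uρ) = w0 := by rw [hw0, ← hz]; abel
    rwa [← hz, he] at h
  -- coercivity kills w0
  have hA3 : A w0 w0 ≤ 0 := by
    have hexp : A w0 w0 = (A uρ w0 - A uκ w0) + A z w0 := by
      simp only [hw0, map_add, map_sub, ContinuousLinearMap.add_apply,
        ContinuousLinearMap.sub_apply]
      ring
    linarith
  have hw00 : w0 = 0 := by
    have h0 := hcoer w0
    have h1 : ‖w0‖ ^ 2 ≤ 0 := by nlinarith
    have h2 : ‖w0‖ = 0 := by nlinarith [norm_nonneg w0]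
    exact norm_eq_zero.mp h2
  -- conclude
  have hι0 : (ι uρ - ι uκ) + ((ι uκ - ι uρ) ⊔ 0) = 0 := by
    rw [← hw0e, hw00, map_zero]
  have hzpos : (0 : Lp ℝ 2 (volume : Measure Ω)) ≤ (ι uκ - ι uρ) ⊔ 0 := le_sup_right
  have hle : ι uρ - ι uκ ≤ 0 := by
    have := eq_neg_of_add_eq_zero_left hι0
    rw [this]
    exact neg_nonpos.mpr hzpos
  exact sub_nonpos.mp hle
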